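/- Fix r ≥ 2 and k ≥ 1, and let n = r^k. Among all r-furcating rooted tree shapes with n leaves, the fully symmetric r-furcating tree (in which every internal node's r subtrees are identical fully symmetric trees of the next smaller size) is the unique tree that is an H-tree constructed by the Huffman r-ary merging algorithm starting from the uniform weight vector of n ones. -/

import Mathlib

/-- Rooted trees with unlabeled leaves: a tree is a leaf or a list of subtrees. -/
inductive RTree : Type
  | leaf : RTree
  | node : List RTree → RTree

namespace RTree

/-- Number of leaves of a rooted tree. -/
def leaves : RTree → ℕ
  | leaf => 1
  | node ts => (ts.attach.map (fun ⟨t, _⟩ => leaves t)).sum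
decreasing_by
  have := List.sizeOf_lt_of_mem ‹_›
  simp only [RTree.node.sizeOf_spec]
  omega

/-- Multiset of values `m(v)` (number of descendant leaves) over internal nodes `v`. -/
def weights : RTree → Multiset ℕ
  | leaf => 0
  | node ts => leaves (node ts) ::ₘ (ts.attach.map (fun ⟨t, _⟩ => weights t)).sum
decreasing_by
  have := List.sizeOf_lt_of_mem ‹_›
  simp only [RTree.node.sizeOf_spec]
  omega

/-- A tree is (strictly) r-furcating if every internal node has exactly r children. -/
inductive IsRFurcating (r : ℕ) : RTree → Prop
  | leaf : IsRFurcating r .leaf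
  | node (ts : List RTree) (hlen : ts.length = r)
      (hts : ∀ t ∈ ts, IsRFurcating r t) : IsRFurcating r (.node ts)

/-- The number of labeled histories of (any labeling of) an r-furcating tree,
via the recursion `N(T) = multinomial(w−1; w₁,…,w_r) ∏ N(Tᵢ)` where
`wᵢ = (|Tᵢ|−1)/(r−1)` and `w − 1 = ∑ wᵢ`. -/
def NLH (r : ℕ) : RTree → ℕ
  | leaf => 1
  | node ts =>
      (Nat.factorial ((ts.map (fun t => (leaves t - 1) / (r - 1))).sum) /
        (ts.map (fun t => Nat.factorial ((leaves t - 1) / (r - 1)))).prod) *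
      (ts.attach.map (fun ⟨t, _⟩ => NLH r t)).prod
decreasing_by
  have := List.sizeOf_lt_of_mem ‹_›
  simp only [RTree.node.sizeOf_spec]
  omega

/-- Shape equality of rooted trees: same unlabeled topology, i.e., children
lists agree up to permutation and recursive shape equality. -/
inductive SameShape : RTree → RTree → Prop
  | leaf : SameShape .leaf .leaf
  | node {l₁ l₂ l₃ : List RTree} :
      List.Forall₂ SameShape l₁ l₂ → l₂.Perm l₃ → SameShape (.node l₁) (.node l₃)

end RTree

namespace RTree

/-- One step of the r-ary Huffman algorithm on a multiset of already-built
trees: merge `r` trees of minimal weight into a new node (with all-ones initial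
leaf weights, the weight of a tree is its number of leaves). -/
inductive HuffStep (r : ℕ) : Multiset RTree → Multiset RTree → Prop
  | step (l : List RTree) (rest : Multiset RTree) (hlen : l.length = r)
      (hmin : ∀ a ∈ l, ∀ b ∈ rest, leaves a ≤ leaves b) :
      HuffStep r ((l : Multiset RTree) + rest) (RTree.node l ::ₘ rest)

/-- `T` is an H-tree on `n` leaves for the uniform all-ones weight vector:
it can be produced by repeatedly merging `r` minimal-weight nodes starting
from `n` leaves. -/
def IsHTree (r n : ℕ) (T : RTree) : Prop :=
  Relation.ReflTransGen (HuffStep r) (Multiset.replicate n RTree.leaf) {T}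

/-- The fully symmetric r-furcating tree on `r^k` leaves. -/
def fullSym (r : ℕ) : ℕ → RTree
  | 0 => .leaf
  | k + 1 => .node (List.replicate r (fullSym r k))

end RTree

namespace RTree
lemma leaves_node (ts : List RTree) : leaves (node ts) = (ts.map leaves).sum := by
  rw [leaves]
  congr 1
  simp [List.attach_map_val]
lemma sameShape_refl : ∀ T, SameShape T T
  | .leaf => .leaf
  | .node ts => .node (List.forall₂_same.mpr fun t ht => sameShape_refl t) (List.Perm.refl ts)
decreasing_by
  have := List.sizeOf_lt_of_mem ht
  simp only [RTree.node.sizeOf_spec]; omega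
lemma leaves_fullSym (r j : ℕ) : leaves (fullSym r j) = r ^ j := by
  induction j with
  | zero => simp [fullSym, leaves]
  | succ j ih => rw [fullSym, leaves_node]; simp [ih, pow_succ, mul_comm]
end RTree

namespace RTree

lemma huffStep_iff {r : ℕ} {s s' : Multiset RTree} : HuffStep r s s' ↔
    ∃ (l : List RTree) (rest : Multiset RTree), l.length = r ∧ (∀ a ∈ l, ∀ b ∈ rest, leaves a ≤ leaves b) ∧
      s = (l : Multiset RTree) + rest ∧ s' = RTree.node l ::ₘ rest := by
  constructor
  · intro h
    cases h with
    | step l rest hlen hmin => exact ⟨l, rest, hlen, hmin, rfl, rfl⟩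
  · rintro ⟨l, rest, h1, h2, rfl, rfl⟩
    exact .step l rest h1 h2

/-- merging r copies of A when everything else is at least as heavy -/
lemma huffStep_merge (r : ℕ) (A : RTree) (M : Multiset RTree)
    (h : ∀ b ∈ M, leaves A ≤ leaves b) :
    HuffStep r (Multiset.replicate r A + M) (RTree.node (List.replicate r A) ::ₘ M) := by
  rw [huffStep_iff]
  refine ⟨List.replicate r A, M, by simp, ?_, by rw [Multiset.coe_replicate], rfl⟩
  intro a ha b hb
  rw [List.eq_of_mem_replicate ha]
  exact h b hb

lemma phase (r : ℕ) (hr : 1 ≤ r) (A : RTree) :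
    ∀ a b, Relation.ReflTransGen (HuffStep r)
      (Multiset.replicate (a * r) A + Multiset.replicate b (RTree.node (List.replicate r A)))
      (Multiset.replicate (a + b) (RTree.node (List.replicate r A))) := by
  intro a
  induction a with
  | zero =>
    intro b
    simp only [Nat.zero_mul, Multiset.replicate_zero, Nat.zero_add, zero_add]
    exact .refl
  | succ a ih =>
    intro b
    set B := RTree.node (List.replicate r A) with hB
    have hAB : leaves A ≤ leaves B := by
      rw [hB, leaves_node]
      simp only [List.map_replicate, List.sum_replicate, smul_eq_mul]
      nlinarith [Nat.one_le_iff_ne_zero.mp hr]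
    have hsplit : Multiset.replicate ((a+1) * r) A
        = Multiset.replicate r A + Multiset.replicate (a * r) A := by
      rw [← Multiset.replicate_add]; congr 1; ring
    have hstep : HuffStep r
        (Multiset.replicate ((a+1) * r) A + Multiset.replicate b B)
        (B ::ₘ (Multiset.replicate (a * r) A + Multiset.replicate b B)) := by
      rw [hsplit, add_assoc]
      exact huffStep_merge r A _ (by
        intro x hx
        rcases Multiset.mem_add.mp hx with hx | hx
        · rw [Multiset.eq_of_mem_replicate hx]
        · rw [Multiset.eq_of_mem_replicate hx]; exact hAB)
    refine Relation.ReflTransGen.head hstep ?_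
    have heq : (B ::ₘ (Multiset.replicate (a * r) A + Multiset.replicate b B))
        = Multiset.replicate (a * r) A + Multiset.replicate (b + 1) B := by
      rw [Multiset.replicate_succ, Multiset.add_cons]
    rw [heq]
    have := ih (b + 1)
    rwa [show a + (b+1) = a + 1 + b by omega] at this

lemma exists_path (r : ℕ) (hr : 1 ≤ r) :
    ∀ m j, Relation.ReflTransGen (HuffStep r)
      (Multiset.replicate (r ^ m) (fullSym r j)) {fullSym r (j + m)} := by
  intro m
  induction m with
  | zero =>
    intro j
    simp only [pow_zero, Multiset.replicate_one, Nat.add_zero]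
    exact .refl
  | succ m ih =>
    intro j
    have h1 := phase r hr (fullSym r j) (r ^ m) 0
    simp only [Multiset.replicate_zero, add_zero] at h1
    have h2 : RTree.node (List.replicate r (fullSym r j)) = fullSym r (j + 1) := by
      rw [fullSym]
    rw [h2, ← pow_succ] at h1
    refine h1.trans ?_
    have := ih (j + 1)
    rwa [show j + 1 + m = j + (m + 1) by omega] at this

end RTree

namespace RTree

def Inv (r k : ℕ) (s : Multiset RTree) : Prop :=
  s = {fullSym r k} ∨
  ∃ j a b, 0 < a ∧ r ∣ a ∧ a + b * r = r ^ (k - j) ∧ j < k ∧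
    s = Multiset.replicate a (fullSym r j) + Multiset.replicate b (fullSym r (j + 1))

lemma inv_step {r k : ℕ} (hr : 2 ≤ r) {s s' : Multiset RTree}
    (hs : Inv r k s) (h : HuffStep r s s') : Inv r k s' := by
  classical
  obtain ⟨l, rest, hlen, hmin, hseq, hs'eq⟩ := huffStep_iff.mp h
  rcases hs with hsing | ⟨j, a, b, ha, hdvd, heq, hjk, hform⟩
  · -- impossible: singleton has card 1 < r
    exfalso
    have hcard : Multiset.card s = 1 := by rw [hsing]; simp
    rw [hseq] at hcard
    simp [hlen] at hcard
    omega
  · set A := fullSym r j with hA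
    set B := fullSym r (j + 1) with hBdef
    have hlA : leaves A = r ^ j := leaves_fullSym r j
    have hlB : leaves B = r ^ (j + 1) := leaves_fullSym r (j + 1)
    have hltAB : leaves A < leaves B := by
      rw [hlA, hlB]
      exact Nat.pow_lt_pow_succ (by omega)
    have hAB : A ≠ B := fun hx => by rw [hx] at hltAB; omega
    have hra : r ≤ a := Nat.le_of_dvd ha hdvd
    -- every element of l is A
    have hmemAll : ∀ x ∈ l, x = A := by
      by_contra hcon
      push_neg at hcon
      obtain ⟨x, hxl, hxA⟩ := hcon
      have hxs : x ∈ s := by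
        rw [hseq]; exact Multiset.mem_add.mpr (Or.inl (by simpa using hxl))
      have hxB : x = B := by
        rw [hform] at hxs
        rcases Multiset.mem_add.mp hxs with hx | hx
        · exact absurd (Multiset.eq_of_mem_replicate hx) hxA
        · exact Multiset.eq_of_mem_replicate hx
      -- then A ∈ rest
      have hcountl : Multiset.count A (l : Multiset RTree) < r := by
        rcases Nat.lt_or_ge (Multiset.count A (l : Multiset RTree)) r with h' | h'
        · exact h'
        · exfalso
          have hle : Multiset.count A (l : Multiset RTree) ≤ Multiset.card (l : Multiset RTree) :=
            Multiset.count_le_card _ _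
          have hcard : Multiset.card (l : Multiset RTree) = r := by simp [hlen]
          have heqc : Multiset.count A (l : Multiset RTree) = Multiset.card (l : Multiset RTree) := by
            omega
          have hall := Multiset.count_eq_card.mp heqc
          exact hxA ((hall x (by simpa using hxl)).symm)
      have hcounts : Multiset.count A s = a := by
        rw [hform]
        rw [Multiset.count_add, Multiset.count_replicate, Multiset.count_replicate]
        simp [hAB, Ne.symm hAB]
      have hcountrest : 0 < Multiset.count A rest := by
        have : Multiset.count A s = Multiset.count A (l : Multiset RTree) + Multiset.count A rest := by
          rw [hseq, Multiset.count_add]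
        omega
      have hArest : A ∈ rest := Multiset.count_pos.mp hcountrest
      have := hmin x hxl A hArest
      rw [hxB] at this
      omega
    have hlrep : l = List.replicate r A := by
      rw [← hlen]; exact List.eq_replicate_of_mem hmemAll
    have hnode : RTree.node l = B := by rw [hlrep, hBdef, fullSym]
    -- rest = replicate (a-r) A + replicate b B
    have hrest : rest = Multiset.replicate (a - r) A + Multiset.replicate b B := by
      have h1 : (l : Multiset RTree) = Multiset.replicate r A := by
        rw [hlrep, Multiset.coe_replicate]
      have h2 : Multiset.replicate a A
          = Multiset.replicate r A + Multiset.replicate (a - r) A := by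
        rw [← Multiset.replicate_add]; congr 1; omega
      have h3 : (l : Multiset RTree) + rest
          = (l : Multiset RTree) + (Multiset.replicate (a - r) A + Multiset.replicate b B) := by
        rw [← hseq, hform, h2, h1, add_assoc]
      exact add_left_cancel h3
    have hs'form : s' = Multiset.replicate (a - r) A + Multiset.replicate (b + 1) B := by
      rw [hs'eq, hnode, hrest, Multiset.replicate_succ, Multiset.add_cons]
    -- split on whether a = r
    rcases Nat.lt_or_ge r a with hlt | hge
    · -- a - r > 0
      right
      have hdist : (b + 1) * r = b * r + r := by ring
      refine ⟨j, a - r, b + 1, by omega, ?_, by omega, hjk, hs'form⟩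
      exact (Nat.dvd_sub hdvd dvd_rfl)
    · -- a = r
      have har : a = r := le_antisymm hge hra
      have hs'2 : s' = Multiset.replicate (b + 1) B := by
        rw [hs'form, har]
        simp
      have hkj : 1 ≤ k - j := by omega
      have hdist : (b + 1) * r = b * r + r := by ring
      have heq2 : (b + 1) * r = r ^ (k - j) := by omega
      have heq3 : b + 1 = r ^ (k - j - 1) := by
        have hrpos : 0 < r := by omega
        have : r ^ (k - j) = r ^ (k - j - 1) * r := by
          rw [← pow_succ]; congr 1; omega
        rw [this] at heq2
        exact Nat.eq_of_mul_eq_mul_right hrpos heq2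
      rcases Nat.lt_or_ge (j + 1) k with hj1 | hj1
      · right
        refine ⟨j + 1, b + 1, 0, by omega, ?_, ?_, hj1, by simpa using hs'2⟩
        · rw [heq3]
          exact dvd_pow_self r (by omega)
        · rw [heq3, show k - j - 1 = k - (j + 1) from by omega]
          ring
      · -- j + 1 = k
        left
        have hjk1 : j + 1 = k := by omega
        have : b + 1 = 1 := by
          rw [heq3]
          have : k - j - 1 = 0 := by omega
          rw [this, pow_zero]
        rw [hs'2, this, Multiset.replicate_one, hBdef, hjk1]

lemma inv_of_path {r k : ℕ} (hr : 2 ≤ r) {s s' : Multiset RTree}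
    (h : Relation.ReflTransGen (HuffStep r) s s') (hs : Inv r k s) : Inv r k s' := by
  induction h with
  | refl => exact hs
  | tail _ hstep ih => exact inv_step hr ih hstep

end RTree

open RTree in
/-- On `n = r^k` leaves (`k ≥ 1`) with the uniform weight vector, the fully
symmetric r-furcating tree is an H-tree, and it is the unique such tree shape:
every H-tree has the shape of the fully symmetric tree. -/
theorem fullSym_unique_HTree (r : ℕ) (hr : 2 ≤ r) (k : ℕ) (hk : 1 ≤ k) :
    IsHTree r (r ^ k) (fullSym r k) ∧
    ∀ T : RTree, IsHTree r (r ^ k) T → SameShape T (fullSym r k) := by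
  constructor
  · have h := exists_path r (by omega) k 0
    unfold IsHTree
    have h0 : fullSym r 0 = RTree.leaf := by rw [fullSym]
    rw [h0] at h
    simpa using h
  · intro T hT
    have hinit : Inv r k (Multiset.replicate (r ^ k) RTree.leaf) := by
      right
      refine ⟨0, r ^ k, 0, pow_pos (by omega) k, dvd_pow_self r (by omega), by simp, hk, ?_⟩
      have h0 : fullSym r 0 = RTree.leaf := by rw [fullSym]
      simp [h0]
    have hinv : Inv r k ({T} : Multiset RTree) := inv_of_path hr hT hinit
    rcases hinv with h1 | ⟨j, a, b, ha, hdvd, heq, hjk, hform⟩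
    · have hTeq : T = fullSym r k := by
        have := Multiset.singleton_inj.mp h1
        exact this
      rw [hTeq]
      exact sameShape_refl _
    · exfalso
      have hcard : Multiset.card ({T} : Multiset RTree) = 1 := by simp
      rw [hform] at hcard
      simp at hcard
      have := Nat.le_of_dvd ha hdvd
      omega
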